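/- arXiv:1102.2546 — 3 statements merged into one kernel-verified Lean document; each statement's English description precedes it below -/
import Mathlib

section
/- Let m,n be integers with 1<m<n, φ a parallel calibration of degree m on ℝⁿ, ψ = (∂_r ⌟ φ)|_{S^{n−1}}, X a compact (m−1)-dimensional oriented submanifold of S^{n−1}, and 0<b₀<b₁. Then X is a ψ-submanifold of S^{n−1} if and only if the annulus cone A(b₀,b₁;X) is a φ-submanifold of A(b₀,b₁;S^{n−1}). -/
/- Common framework: parallel calibrations on ℝⁿ, oriented submanifolds (modelled as a set
together with a field of oriented orthonormal tangent frames, whose span is the tangent cone),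
calibrated (φ-)submanifolds, the sphere form ψ = (∂_r ⌟ φ)|_{S^{n-1}}, cones over subsets of the
sphere, cylindrical norms of normal vector fields, graphs G(ν), and exterior derivatives. -/

open MeasureTheory Set Metric
open scoped RealInnerProductSpace ENNReal

noncomputable section

/-- Euclidean space ℝⁿ. -/
abbrev E (n : ℕ) := EuclideanSpace ℝ (Fin n)

/-- `φ` has comass ≤ 1: `φ(v₁,…,v_m) ≤ 1` for all orthonormal `v₁,…,v_m`.  A *parallel
calibration* of degree `m` on ℝⁿ is (identified with) a constant-coefficient alternating
`m`-form of comass ≤ 1 (constant forms are automatically closed). -/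
def ComassLeOne {n m : ℕ} (φ : AlternatingMap ℝ (E n) ℝ (Fin m)) : Prop :=
  ∀ v : Fin m → E n, Orthonormal ℝ v → φ v ≤ 1

/-- Insert `x` in front of the `(m-1)`-tuple `v`, producing an `m`-tuple. -/
def minsert {n m : ℕ} (x : E n) (v : Fin (m - 1) → E n) : Fin m → E n :=
  fun i => if h : (i : ℕ) = 0 then x else v ⟨(i : ℕ) - 1, by have := i.isLt; omega⟩

/-- `M` is a `k`-dimensional oriented submanifold of ℝⁿ, with oriented orthonormal tangent
frame field `τ`: at every point of `M` the frame is orthonormal and spans the tangent space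
(tangent cone) of `M`. -/
def IsOrientedSubmanifold {n : ℕ} (k : ℕ) (M : Set (E n)) (τ : E n → Fin k → E n) : Prop :=
  (∀ x ∈ M, Orthonormal ℝ (τ x)) ∧
  (∀ x ∈ M, tangentConeAt ℝ M x = (Submodule.span ℝ (Set.range (τ x)) : Set (E n)))

/-- `M` (with frame `σ`) is a φ-submanifold contained in `U`: an `m`-dimensional oriented
submanifold on which `φ` restricts to the volume form, i.e. `φ = 1` on oriented orthonormal
tangent frames. -/
def IsPhiSubmanifoldOf {n m : ℕ} (φ : AlternatingMap ℝ (E n) ℝ (Fin m))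
    (M : Set (E n)) (σ : E n → Fin m → E n) (U : Set (E n)) : Prop :=
  M ⊆ U ∧ IsOrientedSubmanifold m M σ ∧ ∀ x ∈ M, φ (σ x) = 1

/-- `X` (with frame `τ`) is a ψ-submanifold of the unit sphere, where
`ψ = (∂_r ⌟ φ)|_{S^{n-1}}`:  at `x ∈ S^{n-1}` one has `ψ_x(v₁,…,v_{m-1}) = φ(x,v₁,…,v_{m-1})`
(the radial unit vector at `x` is `x` itself). -/
def IsPsiSubmanifold {n m : ℕ} (φ : AlternatingMap ℝ (E n) ℝ (Fin m))
    (X : Set (E n)) (τ : E n → Fin (m - 1) → E n) : Prop :=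
  X ⊆ sphere (0 : E n) 1 ∧ IsOrientedSubmanifold (m - 1) X τ ∧
    ∀ x ∈ X, φ (minsert x (τ x)) = 1

/-- The cone `A(b₀,b₁;X)`: preimage of `(b₀,b₁) × X` under polar coordinates. -/
def coneA {n : ℕ} (b₀ b₁ : ℝ) (X : Set (E n)) : Set (E n) :=
  {a | b₀ < ‖a‖ ∧ ‖a‖ < b₁ ∧ ‖a‖⁻¹ • a ∈ X}

/-- The oriented orthonormal frame of the cone `A(b₀,b₁;X)` induced by a frame `τ` of `X`:
the radial unit vector followed by the frame of `X` at the radial projection. -/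
def coneFrame {n m : ℕ} (τ : E n → Fin (m - 1) → E n) : E n → Fin m → E n :=
  fun a => minsert (‖a‖⁻¹ • a) (τ (‖a‖⁻¹ • a))

/-- The radial projection `s(a) = a/|a|`. -/
def sphProj {n : ℕ} (a : E n) : E n := ‖a‖⁻¹ • a

/-- The pullback `s*ψ` of `ψ = (∂_r ⌟ φ)|_{S^{n-1}}` under the radial projection `s`,
as an `(m-1)`-form on `ℝⁿ∖{0}`:
`(s*ψ)_a(v₁,…,v_{m-1}) = ψ_{s(a)}(ds_a v₁, …, ds_a v_{m-1})`. -/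
def pullPsi {n m : ℕ} (φ : AlternatingMap ℝ (E n) ℝ (Fin m)) (a : E n)
    (v : Fin (m - 1) → E n) : ℝ :=
  φ (minsert (sphProj a) (fun j => fderiv ℝ (sphProj (n := n)) a (v j)))

/-- Exterior derivative of a `k`-form `ω` (given as a function of the point and of `k`
constant vectors) on ℝⁿ:
`dω_a(v₀,…,v_k) = Σᵢ (-1)ⁱ ∂_{vᵢ}[ω_y(v₀,…,v̂ᵢ,…,v_k)]|_{y=a}`. -/
def extD {n k : ℕ} (ω : E n → (Fin k → E n) → ℝ) (a : E n) (v : Fin (k + 1) → E n) : ℝ :=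
  ∑ i : Fin (k + 1),
    (-1 : ℝ) ^ (i : ℕ) * fderiv ℝ (fun y => ω y (fun j => v (i.succAbove j))) a (v i)

/-- `ν` is a field normal to the submanifold with frame `σ` along `A`. -/
def IsNormalField {n m : ℕ} (A : Set (E n)) (σ : E n → Fin m → E n) (ν : E n → E n) : Prop :=
  ∀ a ∈ A, ∀ i, ⟪ν a, σ a i⟫ = 0

/-- `‖ν‖_{C⁰_cyl} ≤ ε` on `A` : `sup |ν|/r ≤ ε` (cylindrical metric `dr²/r² + ds²`). -/
def cylC0Le {n : ℕ} (A : Set (E n)) (ν : E n → E n) (ε : ℝ) : Prop :=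
  ∀ a ∈ A, ‖ν a‖ / ‖a‖ ≤ ε

/-- `‖ν‖_{C¹_cyl} ≤ ε` on `A` : `sup (|ν|/r + |Dν|) ≤ ε` (cylindrical metric). -/
def cylC1Le {n : ℕ} (A : Set (E n)) (ν : E n → E n) (ε : ℝ) : Prop :=
  ∀ a ∈ A, ‖ν a‖ / ‖a‖ + ‖fderiv ℝ ν a‖ ≤ ε

/-- A cylindrical distance on ℝⁿ∖{0} inducing the metric `dr²/r² + ds²`. -/
def dCyl {n : ℕ} (a b : E n) : ℝ :=
  dist (sphProj a) (sphProj b) + |Real.log ‖a‖ - Real.log ‖b‖|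

/-- `‖ν‖_{C^{1,1/2}_cyl} ≤ ε` on `A` : the `C¹` bound together with a 1/2-Hölder bound on the
derivative, with respect to the cylindrical metric. -/
def cylC1HalfLe {n : ℕ} (A : Set (E n)) (ν : E n → E n) (ε : ℝ) : Prop :=
  cylC1Le A ν ε ∧
  ∀ a ∈ A, ∀ b ∈ A, ‖fderiv ℝ ν a - fderiv ℝ ν b‖ ≤ ε * dCyl a b ^ ((1 : ℝ) / 2)

/-- The graph map `a ↦ (|a|/√(|a|²+|ν(a)|²))(a + ν(a))`. -/
def graphMap {n : ℕ} (ν : E n → E n) (a : E n) : E n :=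
  (‖a‖ / Real.sqrt (‖a‖ ^ 2 + ‖ν a‖ ^ 2)) • (a + ν a)

/-- `G(ν)`, the graph of the normal field `ν` over `A`. -/
def graphSet {n : ℕ} (ν : E n → E n) (A : Set (E n)) : Set (E n) := graphMap ν '' A

/-- `M` is closed in the (open) set `U`. -/
def IsClosedIn {n : ℕ} (M U : Set (E n)) : Prop := closure M ∩ U ⊆ M

open Topology Filter

lemma inner_zero_of_tangent_sphere {n : ℕ} {x y : E n} (hx : ‖x‖ = 1)
    (hy : y ∈ tangentConeAt ℝ (sphere (0 : E n) 1) x) : ⟪x, y⟫ = 0 := by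
  obtain ⟨c, d, hc, hmem, hcd⟩ := mem_tangentConeAt_iff_exists_seq_norm_tendsto_atTop.1 hy
  have hd0 : Filter.Tendsto d Filter.atTop (𝓝 0) := tangentConeAt.lim_zero _ hc hcd
  have h1 : Filter.Tendsto (fun k => ⟪x, c k • d k⟫) Filter.atTop (𝓝 ⟪x, y⟫) :=
    Filter.Tendsto.inner tendsto_const_nhds hcd
  have h3 : Filter.Tendsto (fun k => -(1 / 2 : ℝ) * ⟪c k • d k, d k⟫) Filter.atTop (𝓝 0) := by
    have := (Filter.Tendsto.inner hcd hd0).const_mul (-(1 / 2 : ℝ))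
    simpa using this
  have heq : ∀ᶠ k in Filter.atTop,
      -(1 / 2 : ℝ) * ⟪c k • d k, d k⟫ = ⟪x, c k • d k⟫ := by
    filter_upwards [hmem] with k hk
    have hnorm : ‖x + d k‖ = 1 := by
      simpa using mem_sphere_zero_iff_norm.1 hk
    have hsq : ‖x + d k‖ ^ 2 = ‖x‖ ^ 2 + 2 * ⟪x, d k⟫ + ‖d k‖ ^ 2 := norm_add_sq_real x (d k)
    rw [hnorm, hx] at hsq
    have hxd : ⟪x, d k⟫ = -(1 / 2 : ℝ) * (‖d k‖ ^ 2) := by nlinarith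
    rw [real_inner_smul_right, real_inner_smul_left, hxd, real_inner_self_eq_norm_sq]
    ring
  exact (tendsto_nhds_unique h1 (h3.congr' heq)).symm ▸ rfl

lemma range_minsert {n m : ℕ} (hm : 0 < m) (x : E n) (v : Fin (m - 1) → E n) :
    Set.range (minsert x v) = insert x (Set.range v) := by
  ext y
  constructor
  · rintro ⟨i, rfl⟩
    by_cases h : (i : ℕ) = 0
    · left; simp [minsert, h]
    · right
      exact ⟨⟨(i : ℕ) - 1, by have := i.isLt; omega⟩, by simp [minsert, h]⟩
  · rintro (rfl | ⟨j, rfl⟩)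
    · exact ⟨⟨0, hm⟩, by simp [minsert]⟩
    · refine ⟨⟨(j : ℕ) + 1, by have := j.isLt; omega⟩, ?_⟩
      simp only [minsert]
      rw [dif_neg (by simp)]
      exact congrArg v (Fin.ext (by simp))

lemma orthonormal_minsert {n m : ℕ} {x : E n} (hx : ‖x‖ = 1)
    {v : Fin (m - 1) → E n} (hv : Orthonormal ℝ v) (hxv : ∀ j, ⟪x, v j⟫ = 0) :
    Orthonormal ℝ (minsert x v) := by
  rw [orthonormal_iff_ite] at hv ⊢
  intro i j
  by_cases hi : (i : ℕ) = 0 <;> by_cases hj : (j : ℕ) = 0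
  · have hij : i = j := Fin.ext (by omega)
    simp only [minsert, hi, hj, dif_pos, if_pos hij]
    rw [real_inner_self_eq_norm_sq, hx]; norm_num
  · have hij : i ≠ j := fun h => hj (h ▸ hi)
    simp only [minsert]
    rw [dif_pos hi, dif_neg hj, if_neg hij]
    exact hxv _
  · have hij : i ≠ j := fun h => hi (h ▸ hj)
    simp only [minsert]
    rw [dif_neg hi, dif_pos hj, if_neg hij, real_inner_comm]
    exact hxv _
  · simp only [minsert]
    rw [dif_neg hi, dif_neg hj, hv]
    congr 1
    simp only [eq_iff_iff, Fin.ext_iff]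
    have := i.isLt; have := j.isLt
    constructor <;> intro h <;> omega
lemma tangentCone_coneA {n m : ℕ} {b₀ b₁ : ℝ} (hb₀ : 0 < b₀)
    {X : Set (E n)} (hXs : X ⊆ sphere (0 : E n) 1) (τ : E n → Fin (m - 1) → E n)
    (hτ : ∀ x ∈ X, tangentConeAt ℝ X x = (Submodule.span ℝ (Set.range (τ x)) : Set (E n)))
    {a : E n} (ha : a ∈ coneA b₀ b₁ X) :
    tangentConeAt ℝ (coneA b₀ b₁ X) a
      = (Submodule.span ℝ (insert (‖a‖⁻¹ • a) (Set.range (τ (‖a‖⁻¹ • a)))) : Set (E n)) := by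
  obtain ⟨ha1, ha2, hax⟩ := ha
  set r : ℝ := ‖a‖ with hr
  have hr0 : 0 < r := lt_trans hb₀ ha1
  set x : E n := ‖a‖⁻¹ • a with hxdef
  have hxX : x ∈ X := hax
  have hxn : ‖x‖ = 1 := mem_sphere_zero_iff_norm.1 (hXs hxX)
  have hrx : r • x = a := smul_inv_smul₀ (ne_of_gt hr0) a
  have hT := hτ x hxX
  ext y
  simp only [SetLike.mem_coe]
  constructor
  · intro hy'
    obtain ⟨c, d, hc, hdmem, hcd⟩ := mem_tangentConeAt_iff_exists_seq_norm_tendsto_atTop.1 hy'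
    have hd0 : Filter.Tendsto d atTop (𝓝 0) := tangentConeAt.lim_zero _ hc hcd
    set rr : ℕ → ℝ := fun k => ‖a + d k‖ with hrrdef
    set e : ℕ → E n := fun k => (rr k)⁻¹ • (a + d k) - x with hedef
    have hrr : Filter.Tendsto rr atTop (𝓝 r) := by
      have h0 : Filter.Tendsto (fun k => a + d k) atTop (𝓝 (a + 0)) :=
        tendsto_const_nhds.add hd0
      simpa [hrrdef] using h0.norm
    set C : ℝ := ‖y‖ + 1 with hCdef
    have hC0 : 0 ≤ C := by positivity
    have hCbd : ∀ᶠ k in atTop, ‖c k • d k‖ ≤ C :=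
      hcd.norm.eventually (eventually_le_nhds (lt_add_one ‖y‖))
    have hev : ∀ᶠ k in atTop, (a + d k ∈ coneA b₀ b₁ X) ∧ ‖c k • d k‖ ≤ C :=
      hdmem.and hCbd
    obtain ⟨N, hN⟩ := Filter.eventually_atTop.1 hev
    -- bounds
    have key : ∀ k ≥ N, |c k * (rr k - r)| ≤ C ∧ ‖c k • e k‖ ≤ C / b₀ + C / b₀ := by
      intro k hk
      obtain ⟨⟨hk1, hk2, hk3⟩, hk4⟩ := hN k hk
      have hrrk : b₀ < rr k := hk1
      have hrrk0 : 0 < rr k := lt_trans hb₀ hrrk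
      have hdn : |rr k - r| ≤ ‖d k‖ := by
        simpa using abs_norm_sub_norm_le (a + d k) a
      have hckd : |c k| * ‖d k‖ ≤ C := by
        rwa [norm_smul, Real.norm_eq_abs] at hk4
      constructor
      · rw [abs_mul]
        calc |c k| * |rr k - r| ≤ |c k| * ‖d k‖ := by gcongr
          _ ≤ C := hckd
      · have hesplit : c k • e k
            = (c k * ((rr k)⁻¹ - r⁻¹)) • a + (rr k)⁻¹ • (c k • d k) := by
          have : e k = ((rr k)⁻¹ - r⁻¹) • a + (rr k)⁻¹ • d k := by
            simp only [hedef, hxdef, ← hr]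
            rw [smul_add, sub_smul]
            abel
          rw [this]
          rw [smul_add, smul_smul, smul_comm]
        rw [hesplit]
        have h1 : ‖(c k * ((rr k)⁻¹ - r⁻¹)) • a‖ ≤ C / b₀ := by
          rw [norm_smul, Real.norm_eq_abs, abs_mul, ← hr]
          have hinv : |(rr k)⁻¹ - r⁻¹| = |r - rr k| / (rr k * r) := by
            rw [inv_sub_inv (ne_of_gt hrrk0) (ne_of_gt hr0), abs_div,
              abs_of_pos (mul_pos hrrk0 hr0)]
          rw [hinv, abs_sub_comm]
          have : |c k| * (|rr k - r| / (rr k * r)) * r = |c k| * |rr k - r| / rr k := by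
            field_simp
          rw [this]
          have hnum : |c k| * |rr k - r| ≤ C :=
            le_trans (by gcongr) hckd
          exact div_le_div₀ hC0 hnum hb₀ (le_of_lt hrrk)
        have h2 : ‖(rr k)⁻¹ • (c k • d k)‖ ≤ C / b₀ := by
          rw [norm_smul, Real.norm_eq_abs, abs_of_pos (inv_pos.2 hrrk0), inv_mul_eq_div]
          exact div_le_div₀ hC0 hk4 hb₀ (le_of_lt hrrk)
        exact le_trans (norm_add_le _ _) (add_le_add h1 h2)
    -- compactness
    set R : ℝ := max C (C / b₀ + C / b₀) with hRdef
    set g : ℕ → ℝ × E n := fun k => (c (k + N) * (rr (k + N) - r), c (k + N) • e (k + N))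
      with hgdef
    have hgmem : ∀ k, g k ∈ Metric.closedBall (0 : ℝ × E n) R := by
      intro k
      rw [mem_closedBall_zero_iff, Prod.norm_def]
      obtain ⟨hb1, hb2⟩ := key (k + N) (Nat.le_add_left N k)
      exact max_le_max (by simpa [hgdef, abs_mul] using hb1) hb2
    obtain ⟨L, _, φs, hφmono, hφtend⟩ :=
      (isCompact_closedBall (0 : ℝ × E n) R).tendsto_subseq hgmem
    set ψ : ℕ → ℕ := fun k => φs k + N with hψdef
    have hψmono : StrictMono ψ := fun i j hij => Nat.add_lt_add_right (hφmono hij) N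
    have hψat : Filter.Tendsto ψ atTop atTop := hψmono.tendsto_atTop
    have hψge : ∀ k, N ≤ ψ k := fun k => Nat.le_add_left N (φs k)
    have hβψ : Filter.Tendsto (fun k => c (ψ k) * (rr (ψ k) - r)) atTop (𝓝 L.1) := by
      have := (continuous_fst.tendsto L).comp hφtend
      exact this
    have hfψ : Filter.Tendsto (fun k => c (ψ k) • e (ψ k)) atTop (𝓝 L.2) := by
      have := (continuous_snd.tendsto L).comp hφtend
      exact this
    have hL2 : L.2 ∈ tangentConeAt ℝ X x := by
      refine mem_tangentConeAt_iff_exists_seq_norm_tendsto_atTop.2 ⟨fun k => c (ψ k), fun k => e (ψ k), hc.comp hψat, ?_, hfψ⟩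
      refine Filter.Eventually.of_forall fun k => ?_
      obtain ⟨⟨hk1, hk2, hk3⟩, _⟩ := hN (ψ k) (hψge k)
      have : x + e (ψ k) = (rr (ψ k))⁻¹ • (a + d (ψ k)) := by
        simp only [hedef]; abel
      rw [this]; exact hk3
    have hidk : ∀ k, c (ψ k) • d (ψ k)
        = (c (ψ k) * (rr (ψ k) - r)) • x + rr (ψ k) • (c (ψ k) • e (ψ k)) := by
      intro k
      obtain ⟨⟨hk1, _, _⟩, _⟩ := hN (ψ k) (hψge k)
      have hrrk0 : (0 : ℝ) < rr (ψ k) := lt_trans hb₀ hk1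
      have hde : d (ψ k) = (rr (ψ k) - r) • x + rr (ψ k) • e (ψ k) := by
        have h5 : rr (ψ k) • e (ψ k) = (a + d (ψ k)) - rr (ψ k) • x := by
          simp only [hedef]
          rw [smul_sub, smul_inv_smul₀ (ne_of_gt hrrk0)]
        rw [h5, sub_smul, ← hrx]
        abel
      rw [hde]
      module
    have hlim2 : Filter.Tendsto (fun k => c (ψ k) • d (ψ k)) atTop
        (𝓝 (L.1 • x + r • L.2)) := by
      have := (hβψ.smul (tendsto_const_nhds (x := x))).add ((hrr.comp hψat).smul hfψ)
      exact this.congr fun k => (hidk k).symm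
    have hy2 : y = L.1 • x + r • L.2 :=
      tendsto_nhds_unique (hcd.comp hψat) hlim2
    rw [hy2]
    refine Submodule.mem_span_insert.2 ⟨L.1, r • L.2, ?_, rfl⟩
    refine Submodule.smul_mem _ _ ?_
    have := hT ▸ hL2
    exact this
  · intro hy
    rw [Submodule.mem_span_insert] at hy
    obtain ⟨α, z, hz, rfl⟩ := hy
    have hwtc : r⁻¹ • z ∈ tangentConeAt ℝ X x := by
      rw [hT]
      exact SetLike.mem_coe.2 (Submodule.smul_mem _ _ hz)
    set w : E n := r⁻¹ • z with hwdef
    obtain ⟨c, d, hc, hdmem, hcd⟩ := mem_tangentConeAt_iff_exists_seq_norm_tendsto_atTop.1 hwtc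
    have htend : Filter.Tendsto (fun k => α / c k) atTop (𝓝 0) := by
      rw [tendsto_zero_iff_norm_tendsto_zero]
      have h0 : Filter.Tendsto (fun k => |α| * ‖c k‖⁻¹) atTop (𝓝 0) := by
        simpa using (hc.inv_tendsto_atTop).const_mul |α|
      refine h0.congr fun k => ?_
      simp [Real.norm_eq_abs, abs_div, div_eq_mul_inv]
    have ht : Filter.Tendsto (fun k => r + α / c k) atTop (𝓝 r) := by
      simpa using (tendsto_const_nhds (x := r)).add htend
    refine mem_tangentConeAt_iff_exists_seq_norm_tendsto_atTop.2 ⟨c, fun k => (r + α / c k) • (x + d k) - a, hc, ?_, ?_⟩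
    · have hIoo : ∀ᶠ k in atTop, (r + α / c k) ∈ Set.Ioo b₀ b₁ :=
        ht (Ioo_mem_nhds ha1 ha2)
      filter_upwards [hdmem, hIoo] with k hk1 hk2
      have ht0 : 0 < r + α / c k := lt_trans hb₀ hk2.1
      have hxdn : ‖x + d k‖ = 1 := mem_sphere_zero_iff_norm.1 (hXs hk1)
      have hbn : ‖a + ((r + α / c k) • (x + d k) - a)‖ = r + α / c k := by
        rw [add_sub_cancel, norm_smul, hxdn, Real.norm_eq_abs, abs_of_pos ht0, mul_one]
      refine ⟨by rw [hbn]; exact hk2.1, by rw [hbn]; exact hk2.2, ?_⟩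
      rw [hbn, add_sub_cancel, inv_smul_smul₀ (ne_of_gt ht0)]
      exact hk1
    · have hc0 : ∀ᶠ k in atTop, c k ≠ 0 := by
        filter_upwards [hc.eventually_ge_atTop 1] with k hk
        intro h
        rw [h, norm_zero] at hk
        linarith
      have heq : ∀ᶠ k in atTop,
          α • x + (r + α / c k) • (c k • d k)
            = c k • ((r + α / c k) • (x + d k) - a) := by
        filter_upwards [hc0] with k hk
        rw [← hrx]
        set s : ℝ := α / c k with hs
        have hα : α = c k * s := by rw [hs]; field_simp
        rw [hα]
        module
      have hlim : Filter.Tendsto (fun k => α • x + (r + α / c k) • (c k • d k)) atTop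
          (𝓝 (α • x + r • w)) := tendsto_const_nhds.add (ht.smul hcd)
      have hfin := hlim.congr' heq
      have hz' : α • x + r • w = α • x + z := by
        rw [hwdef, smul_inv_smul₀ (ne_of_gt hr0)]
      rwa [hz'] at hfin
/-- Let `1 < m < n`, `φ` a parallel calibration of degree `m` on ℝⁿ,
`ψ = (∂_r ⌟ φ)|_{S^{n-1}}`, `X` a compact `(m-1)`-dimensional oriented submanifold of
`S^{n-1}` (with frame `τ`), and `0 < b₀ < b₁`.  Then `X` is a ψ-submanifold of `S^{n-1}` iff
the cone `A(b₀,b₁;X)` (with its induced frame) is a φ-submanifold of `A(b₀,b₁;S^{n-1})`. -/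
theorem psi_submanifold_iff_cone_phi_submanifold {n m : ℕ} (hm : 1 < m) (hmn : m < n)
    (φ : AlternatingMap ℝ (E n) ℝ (Fin m)) (hφ : ComassLeOne φ)
    (X : Set (E n)) (τ : E n → Fin (m - 1) → E n)
    (hXc : IsCompact X) (hXs : X ⊆ sphere (0 : E n) 1)
    (hXsub : IsOrientedSubmanifold (m - 1) X τ)
    (b₀ b₁ : ℝ) (hb₀ : 0 < b₀) (hb : b₀ < b₁) :
    IsPsiSubmanifold φ X τ ↔
      IsPhiSubmanifoldOf φ (coneA b₀ b₁ X) (coneFrame τ)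
        (coneA b₀ b₁ (sphere (0 : E n) 1)) := by
  constructor
  · rintro ⟨hXs', hsub, hval⟩
    refine ⟨?_, ⟨?_, ?_⟩, ?_⟩
    · rintro a ⟨h1, h2, h3⟩
      exact ⟨h1, h2, hXs h3⟩
    · rintro a ⟨h1, h2, h3⟩
      have hxn : ‖(‖a‖⁻¹ • a)‖ = 1 := mem_sphere_zero_iff_norm.1 (hXs h3)
      have hperp : ∀ j, ⟪‖a‖⁻¹ • a, τ (‖a‖⁻¹ • a) j⟫ = 0 := by
        intro j
        refine inner_zero_of_tangent_sphere hxn (tangentConeAt_mono hXs ?_)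
        rw [hXsub.2 _ h3]
        exact SetLike.mem_coe.2 (Submodule.subset_span (mem_range_self j))
      exact orthonormal_minsert hxn (hXsub.1 _ h3) hperp
    · intro a ha
      have hrange : Set.range (coneFrame τ a)
          = insert (‖a‖⁻¹ • a) (Set.range (τ (‖a‖⁻¹ • a))) :=
        range_minsert (by omega) _ _
      rw [tangentCone_coneA hb₀ hXs τ hXsub.2 ha, hrange]
    · intro a ha
      exact hval _ ha.2.2
  · rintro ⟨hsub, hfr, hval⟩
    refine ⟨hXs, hXsub, ?_⟩
    intro x hx
    have hxn : ‖x‖ = 1 := mem_sphere_zero_iff_norm.1 (hXs hx)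
    set t : ℝ := (b₀ + b₁) / 2 with htdef
    have ht0 : 0 < t := by rw [htdef]; linarith
    have htl : b₀ < t := by rw [htdef]; linarith
    have htu : t < b₁ := by rw [htdef]; linarith
    have hna : ‖t • x‖ = t := by
      rw [norm_smul, hxn, Real.norm_eq_abs, abs_of_pos ht0, mul_one]
    have hproj : ‖t • x‖⁻¹ • (t • x) = x := by
      rw [hna, inv_smul_smul₀ (ne_of_gt ht0)]
    have hmem : t • x ∈ coneA b₀ b₁ X := by
      refine ⟨?_, ?_, ?_⟩
      · rw [hna]; exact htl
      · rw [hna]; exact htu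
      · rw [hproj]; exact hx
    have := hval _ hmem
    have hcf : coneFrame τ (t • x) = minsert x (τ x) := by
      unfold coneFrame
      rw [hproj]
    rwa [hcf] at this
end
end

section
/- Let φ be a parallel calibration of degree m>1 on ℝⁿ and M a φ-submanifold of ℝⁿ. If ν is a vector field along M normal to M, then the restriction of the interior product ν ⌟ φ to M vanishes: (ν ⌟ φ)|_M = 0. Equivalently, φ(ν, v₁, …, v_{m−1}) = 0 whenever v₁,…,v_{m−1} are tangent to M at a point P and ν is normal to M at P. -/
/- Common framework: parallel calibrations on ℝⁿ, oriented submanifolds (modelled as a set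
together with a field of oriented orthonormal tangent frames, whose span is the tangent cone),
calibrated (φ-)submanifolds, the sphere form ψ = (∂_r ⌟ φ)|_{S^{n-1}}, cones over subsets of the
sphere, cylindrical norms of normal vector fields, graphs G(ν), and exterior derivatives. -/

open MeasureTheory Set Metric
open scoped RealInnerProductSpace ENNReal

noncomputable section

lemma minsert_eq_cons {n k : ℕ} (x : E n) (v : Fin (k + 1 - 1) → E n) :
    minsert (m := k + 1) x v = Fin.cons x (v : Fin k → E n) := by
  funext i
  induction i using Fin.cases with
  | zero => simp [minsert]
  | succ j =>
    simp only [minsert, Fin.val_succ, Nat.add_sub_cancel, Fin.cons_succ]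
    rw [dif_neg (by omega)]
    rfl

lemma key_comass {n k : ℕ} (φ : AlternatingMap ℝ (E n) ℝ (Fin (k + 1)))
    (hφ : ComassLeOne φ) (y x : E n) (w : Fin k → E n)
    (hon : Orthonormal ℝ (Fin.cons y w))
    (hx1 : ‖x‖ = 1) (hxy : ⟪x, y⟫ = 0) (hxw : ∀ i, ⟪x, w i⟫ = 0)
    (hε : φ (Fin.cons y w) ^ 2 = 1) :
    φ (Fin.cons x w) = 0 := by
  set ε := φ (Fin.cons y w) with hεdef
  set c := φ (Fin.cons x w) with hcdef
  have hon' := orthonormal_iff_ite.mp hon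
  have hy1 : ⟪y, y⟫ = (1 : ℝ) := by simpa using hon' 0 0
  have hyw : ∀ i, ⟪y, w i⟫ = (0 : ℝ) := fun i => by
    simpa [(Fin.succ_ne_zero i).symm] using hon' 0 i.succ
  have hww : ∀ i j, ⟪w i, w j⟫ = (if i = j then (1 : ℝ) else 0) := fun i j => by
    simpa [Fin.succ_inj] using hon' i.succ j.succ
  have hyx : ⟪y, x⟫ = (0 : ℝ) := by rw [real_inner_comm]; exact hxy
  have hxx : ⟪x, x⟫ = (1 : ℝ) := by
    rw [real_inner_self_eq_norm_sq, hx1]; norm_num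
  set s := Real.sqrt (1 + c ^ 2) with hsdef
  have hs0 : 0 < s := Real.sqrt_pos.mpr (by positivity)
  have hs2 : s ^ 2 = 1 + c ^ 2 := Real.sq_sqrt (by positivity)
  set z := (ε / s) • y + (c / s) • x with hz
  have hzz : ⟪z, z⟫ = (1 : ℝ) := by
    simp only [hz, inner_add_left, inner_add_right, real_inner_smul_left,
      real_inner_smul_right, hy1, hxx, hxy, hyx]
    field_simp
    nlinarith [hs2, hε]
  have hzw : ∀ i, ⟪z, w i⟫ = (0 : ℝ) := fun i => by
    rw [hz, inner_add_left, real_inner_smul_left, real_inner_smul_left, hyw i, hxw i]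
    ring
  have honz : Orthonormal ℝ (Fin.cons z w) := by
    rw [orthonormal_iff_ite]
    intro i j
    induction i using Fin.cases with
    | zero =>
      induction j using Fin.cases with
      | zero => simpa using hzz
      | succ j => simpa [(Fin.succ_ne_zero j).symm] using hzw j
    | succ i =>
      induction j using Fin.cases with
      | zero =>
        simp only [Fin.cons_succ, Fin.cons_zero, Fin.succ_ne_zero, if_neg]
        rw [real_inner_comm]
        simpa using hzw i
      | succ j => simpa [Fin.succ_inj] using hww i j
  have hφz : φ (Fin.cons z w) = (ε / s) * ε + (c / s) * c := by
    have h1 : φ (Fin.cons z w) = φ.curryLeft z w := rfl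
    rw [h1, hz, map_add, _root_.map_smul, _root_.map_smul]
    simp only [AlternatingMap.add_apply, AlternatingMap.smul_apply, smul_eq_mul]
    congr 1
  have hle : φ (Fin.cons z w) ≤ 1 := hφ _ honz
  have hsle : s ≤ 1 := by
    rw [hφz] at hle
    have hval : (ε / s) * ε + (c / s) * c = s := by
      field_simp
      nlinarith [hs2, hε]
    rwa [hval] at hle
  have hc2 : c ^ 2 ≤ 0 := by nlinarith [hs2]
  have : c ^ 2 = 0 := le_antisymm hc2 (sq_nonneg c)
  exact pow_eq_zero_iff (by norm_num) |>.mp this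

/-- **Proposition 3.3.**  Let `φ` be a parallel calibration of degree `m > 1`
on ℝⁿ and `M` a φ-submanifold of ℝⁿ (with frame `σ`).  If `ν` is normal to `M` at `P ∈ M` and
`v₁,…,v_{m-1}` are tangent to `M` at `P`, then `φ(ν, v₁, …, v_{m-1}) = 0`; that is,
`(ν ⌟ φ)|_M = 0`. -/
theorem normal_contraction_vanishes {n m : ℕ} (hm : 1 < m)
    (φ : AlternatingMap ℝ (E n) ℝ (Fin m)) (hφ : ComassLeOne φ)
    (M : Set (E n)) (σ : E n → Fin m → E n)
    (hM : IsPhiSubmanifoldOf φ M σ Set.univ)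
    (P : E n) (hP : P ∈ M) (ν : E n) (hν : ∀ i, ⟪ν, σ P i⟫ = 0)
    (v : Fin (m - 1) → E n)
    (hv : ∀ j, v j ∈ Submodule.span ℝ (Set.range (σ P))) :
    φ (minsert ν v) = 0 := by
  obtain ⟨k, rfl⟩ : ∃ k, m = k + 1 := ⟨m - 1, by omega⟩
  rw [minsert_eq_cons]
  set u := σ P with hu
  have hon : Orthonormal ℝ u := hM.2.1.1 P hP
  have hφu : φ u = 1 := hM.2.2 P hP
  by_cases hν0 : ν = 0
  · subst hν0
    have : φ (Fin.cons (0 : E n) v) = φ.curryLeft 0 v := rfl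
    rw [this, map_zero]
    rfl
  -- expand each v j in the frame
  have hv' : ∀ j : Fin k, ∃ c : Fin (k + 1) → ℝ, ∑ i, c i • u i = v j := fun j =>
    (Submodule.mem_span_range_iff_exists_fun ℝ).mp (hv j)
  choose c hc using hv'
  -- key claim: φ (Fin.cons ν (u ∘ r)) = 0 for every r
  have claim : ∀ r : Fin k → Fin (k + 1), φ (Fin.cons ν (fun j => u (r j))) = 0 := by
    intro r
    by_cases hr : Function.Injective r
    · -- find the missing index
      have hns : ¬ Function.Surjective r := by
        intro hs
        have := Fintype.card_le_of_surjective r hs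
        simp at this
      rw [Function.Surjective] at hns
      push_neg at hns
      obtain ⟨k₀, hk₀⟩ := hns
      have hk₀' : k₀ ∉ Set.range r := by
        rintro ⟨a, ha⟩; exact hk₀ a ha
      -- the permutation
      set e : Fin (k + 1) → Fin (k + 1) := Fin.cons k₀ r with he
      have hei : Function.Injective e := by
        rw [he, Fin.cons_injective_iff]
        exact ⟨hk₀', hr⟩
      have heb : Function.Bijective e := (Finite.injective_iff_bijective).mp hei
      set π : Equiv.Perm (Fin (k + 1)) := Equiv.ofBijective e heb with hπ
      have hcomp : (fun j => u (e j)) = Fin.cons (u k₀) (fun j => u (r j)) := by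
        funext i
        induction i using Fin.cases with
        | zero => simp [he]
        | succ j => simp [he]
      have hεval : φ (Fin.cons (u k₀) (fun j => u (r j))) ^ 2 = 1 := by
        rw [← hcomp]
        have : (fun j => u (e j)) = u ∘ π := rfl
        rw [this, φ.map_perm u π, hφu]
        rcases Int.units_eq_one_or (Equiv.Perm.sign π) with h | h <;> rw [h] <;> norm_num
      -- normalize ν
      set x : E n := ‖ν‖⁻¹ • ν with hx
      have hx1 : ‖x‖ = 1 := norm_smul_inv_norm hν0
      have hνx : ν = ‖ν‖ • x := by
        rw [hx, smul_smul, mul_inv_cancel₀ (norm_ne_zero_iff.mpr hν0), one_smul]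
      have hinner : ∀ i, ⟪x, u i⟫ = (0 : ℝ) := fun i => by
        rw [hx, real_inner_smul_left, hν i, mul_zero]
      have honc : Orthonormal ℝ (Fin.cons (u k₀) (fun j => u (r j))) := by
        rw [← hcomp]
        exact hon.comp e hei
      have hkey : φ (Fin.cons x (fun j => u (r j))) = 0 :=
        key_comass φ hφ (u k₀) x _ honc hx1 (hinner k₀) (fun i => hinner (r i)) hεval
      have : φ (Fin.cons ν (fun j => u (r j))) = φ.curryLeft ν (fun j => u (r j)) := rfl
      rw [this, hνx, _root_.map_smul]
      have h2 : φ.curryLeft x (fun j => u (r j)) = 0 := hkey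
      simp [AlternatingMap.smul_apply, h2]
    · -- repeated entry: alternating map vanishes
      rw [Function.Injective] at hr
      push_neg at hr
      obtain ⟨a, b, hab, hne⟩ := hr
      exact φ.map_eq_zero_of_eq _ (by simp [hab]) (by
        simp only [ne_eq, Fin.succ_inj]
        exact hne) (i := a.succ) (j := b.succ)
  -- multilinear expansion
  have hveq : v = fun j => ∑ i, c j i • u i := by funext j; exact (hc j).symm
  set ψ := φ.curryLeft ν with hψ
  have hgoal : φ (Fin.cons ν v) = ψ v := rfl
  rw [hgoal, hveq]
  have hsum : ψ (fun j => ∑ i, c j i • u i)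
      = ∑ r : Fin k → Fin (k + 1), ψ (fun j => c j (r j) • u (r j)) := by
    exact ψ.toMultilinearMap.map_sum (fun j i => c j i • u i)
  rw [hsum]
  refine Finset.sum_eq_zero fun r _ => ?_
  have : ψ (fun j => c j (r j) • u (r j)) = (∏ j, c j (r j)) • ψ (fun j => u (r j)) :=
    ψ.toMultilinearMap.map_smul_univ (fun j => c j (r j)) (fun j => u (r j))
  rw [this]
  have : ψ (fun j => u (r j)) = φ (Fin.cons ν (fun j => u (r j))) := rfl
  rw [this, claim r, smul_zero]
end
end

section
/- Let m,n be integers with 1<m<n, φ a parallel calibration of degree m on ℝⁿ, ψ = (∂_r ⌟ φ)|_{S^{n−1}}, and M a φ-submanifold of ℝⁿ∖{0}. Then ⟨T⃗M, d(s*ψ)⟩ = m r^{−m} |∂_r ∧ T⃗M|², where T⃗M is the unit simple m-vector field on M dual to its volume form, ⟨·,·⟩ is the pairing of m-vector fields with m-forms, s(a)=a/|a|, and r(a)=|a|. -/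
/- Common framework: parallel calibrations on ℝⁿ, oriented submanifolds (modelled as a set
together with a field of oriented orthonormal tangent frames, whose span is the tangent cone),
calibrated (φ-)submanifolds, the sphere form ψ = (∂_r ⌟ φ)|_{S^{n-1}}, cones over subsets of the
sphere, cylindrical norms of normal vector fields, graphs G(ν), and exterior derivatives. -/

open MeasureTheory Set Metric
open scoped RealInnerProductSpace ENNReal

noncomputable section

/-! ### Auxiliary material for the proof -/

namespace HLaux

variable {n k : ℕ}

/-- Derivative of the norm on Euclidean space away from the origin. -/
lemma hasFDerivAt_norm_self {a : E n} (ha : a ≠ 0) :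
    HasFDerivAt (fun y : E n => ‖y‖) (‖a‖⁻¹ • innerSL ℝ a) a := by
  have h1 : HasFDerivAt (fun y : E n => ‖y‖ ^ 2) (2 • innerSL ℝ a) a := by
    simpa using (hasFDerivAt_id a).norm_sq
  have h2 := h1.sqrt (pow_ne_zero 2 (norm_ne_zero_iff.2 ha))
  have he : (fun y : E n => Real.sqrt (‖y‖ ^ 2)) = fun y : E n => ‖y‖ := by
    funext y; exact Real.sqrt_sq (norm_nonneg y)
  rw [he] at h2
  refine h2.congr_fderiv ?_
  have hs : Real.sqrt (‖a‖ ^ 2) = ‖a‖ := Real.sqrt_sq (norm_nonneg a)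
  ext v
  have hna : ‖a‖ ≠ 0 := norm_ne_zero_iff.2 ha
  simp [hs, smul_smul]
  field_simp

/-- Derivative of `y ↦ ‖y‖⁻¹` away from the origin. -/
lemma hasFDerivAt_norm_inv {a : E n} (ha : a ≠ 0) :
    HasFDerivAt (fun y : E n => ‖y‖⁻¹)
      ((-(‖a‖ ^ 2)⁻¹) • (‖a‖⁻¹ • innerSL ℝ a)) a := by
  have hna : ‖a‖ ≠ 0 := norm_ne_zero_iff.2 ha
  exact (hasDerivAt_inv hna).comp_hasFDerivAt a (hasFDerivAt_norm_self ha)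

/-- Derivative of the radial projection. -/
lemma hasFDerivAt_sphProj {a : E n} (ha : a ≠ 0) :
    HasFDerivAt (sphProj (n := n))
      (‖a‖⁻¹ • ContinuousLinearMap.id ℝ (E n)
        + ((-(‖a‖ ^ 2)⁻¹) • (‖a‖⁻¹ • innerSL ℝ a)).smulRight a) a := by
  have := (hasFDerivAt_norm_inv ha).smul (hasFDerivAt_id a)
  exact this

lemma fderiv_sphProj_apply {a : E n} (ha : a ≠ 0) (v : E n) :
    fderiv ℝ (sphProj (n := n)) a v
      = ‖a‖⁻¹ • v + (-((‖a‖ ^ 2)⁻¹ * ⟪a, v⟫)) • sphProj a := by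
  rw [(hasFDerivAt_sphProj ha).fderiv]
  simp [sphProj, smul_smul]
  ring_nf

variable (ψ : AlternatingMap ℝ (E n) ℝ (Fin (k + 1)))

lemma cons_smul_head (c : ℝ) (x : E n) (w : Fin k → E n) :
    ψ (Fin.cons (c • x) w) = c * ψ (Fin.cons x w) := by
  have h := ψ.curryLeft.map_smul c x
  calc ψ (Fin.cons (c • x) w) = (ψ.curryLeft (c • x)) w := rfl
    _ = c * ψ (Fin.cons x w) := by rw [h]; rfl

lemma cons_add_head (x y : E n) (w : Fin k → E n) :
    ψ (Fin.cons (x + y) w) = ψ (Fin.cons x w) + ψ (Fin.cons y w) := by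
  have h := ψ.curryLeft.map_add x y
  calc ψ (Fin.cons (x + y) w) = (ψ.curryLeft (x + y)) w := rfl
    _ = ψ (Fin.cons x w) + ψ (Fin.cons y w) := by rw [h]; rfl

/-- `x ↦ ψ (x, w)` as a linear map. -/
def consLin (w : Fin k → E n) : E n →ₗ[ℝ] ℝ where
  toFun x := ψ (Fin.cons x w)
  map_add' x y := cons_add_head ψ x y w
  map_smul' c x := by simpa using cons_smul_head ψ c x w

@[simp] lemma consLin_apply (w : Fin k → E n) (x : E n) :
    consLin ψ w x = ψ (Fin.cons x w) := rfl

lemma cons_eq_zero_of_mem (x : E n) (w : Fin k → E n) (j : Fin k) (hj : w j = x) :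
    ψ (Fin.cons x w) = 0 := by
  have h : (Fin.cons x w : Fin (k+1) → E n) 0 = (Fin.cons x w : Fin (k+1) → E n) j.succ := by
    rw [Fin.cons_zero, Fin.cons_succ, hj]
  exact ψ.map_eq_zero_of_eq _ h (Fin.succ_ne_zero j).symm

lemma cons_expand (x : E n) (c : ℝ) (d : Fin k → ℝ) (w : Fin k → E n) :
    ψ (Fin.cons x fun j => c • w j + d j • x) = c ^ k * ψ (Fin.cons x w) := by
  classical
  have key : ∀ S : Finset (Fin k),
      ψ (Fin.cons x fun j => if j ∈ S then c • w j + d j • x else w j)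
        = c ^ S.card * ψ (Fin.cons x w) := by
    intro S
    induction S using Finset.induction_on with
    | empty => simp
    | @insert a S ha ih =>
      have hfun : (fun j => if j ∈ insert a S then c • w j + d j • x else w j)
          = Function.update (fun j => if j ∈ S then c • w j + d j • x else w j) a
              (c • w a + d a • x) := by
        funext j
        rcases eq_or_ne j a with rfl | hja
        · simp [ha]
        · simp [Function.update_of_ne hja, Finset.mem_insert, hja]
      rw [hfun, Fin.cons_update, ψ.map_update_add, ψ.map_update_smul, ψ.map_update_smul,
        ← Fin.cons_update, ← Fin.cons_update]
      have h2 : ψ (Fin.cons x (Function.update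
          (fun j => if j ∈ S then c • w j + d j • x else w j) a x)) = 0 :=
        cons_eq_zero_of_mem ψ x _ a (by simp)
      have h1 : Function.update (fun j => if j ∈ S then c • w j + d j • x else w j) a (w a)
          = fun j => if j ∈ S then c • w j + d j • x else w j := by
        funext j
        rcases eq_or_ne j a with rfl | hja
        · simp [ha]
        · simp [Function.update_of_ne hja]
      rw [h1, h2, ih, Finset.card_insert_of_notMem ha]
      simp [pow_succ]
      ring
  have := key Finset.univ
  simpa [Finset.card_univ] using this

lemma minsert_eq_cons (x : E n) (w : Fin k → E n) :
    minsert (m := k + 1) x w = Fin.cons x w := by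
  funext i
  induction i using Fin.cases with
  | zero => simp [minsert]
  | succ t => simp [minsert, Fin.succ_ne_zero]

lemma orthonormal_update {v : Fin (k+1) → E n} (hv : Orthonormal ℝ v) (ℓ : Fin (k+1))
    (z : E n) (hz1 : ⟪z, z⟫ = 1) (hz2 : ∀ j, j ≠ ℓ → ⟪z, v j⟫ = 0) :
    Orthonormal ℝ (Function.update v ℓ z) := by
  classical
  rw [orthonormal_iff_ite] at hv ⊢
  intro i j
  by_cases hi : i = ℓ <;> by_cases hj : j = ℓ
  · subst hi; subst hj; simpa using hz1
  · subst hi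
    rw [Function.update_self, Function.update_of_ne hj, if_neg (Ne.symm hj)]
    exact hz2 j hj
  · subst hj
    rw [Function.update_self, Function.update_of_ne hi, if_neg hi, real_inner_comm]
    exact hz2 i hi
  · rw [Function.update_of_ne hi, Function.update_of_ne hj]
    exact hv i j

lemma comass_abs {ψ : AlternatingMap ℝ (E n) ℝ (Fin (k+1))}
    (hψ : ∀ v : Fin (k+1) → E n, Orthonormal ℝ v → ψ v ≤ 1)
    {v : Fin (k+1) → E n} (hv : Orthonormal ℝ v) : |ψ v| ≤ 1 := by
  refine abs_le.2 ⟨?_, hψ v hv⟩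
  have hv0 : ⟪v 0, v 0⟫ = 1 := by
    have := orthonormal_iff_ite.mp hv 0 0
    simpa using this
  have horth : Orthonormal ℝ (Function.update v 0 ((-1 : ℝ) • v 0)) := by
    apply orthonormal_update hv 0 _ ?_ ?_
    · simp [real_inner_smul_left, real_inner_smul_right, hv0, hv.1 0]
    · intro j hj
      have h0 : ⟪v 0, v j⟫ = 0 := by
        have := orthonormal_iff_ite.mp hv 0 j
        simpa [Ne.symm hj] using this
      rw [real_inner_smul_left, h0, mul_zero]
  have := hψ _ horth
  rw [ψ.map_update_smul, Function.update_eq_self] at this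
  simp at this
  linarith

lemma crit {ψ : AlternatingMap ℝ (E n) ℝ (Fin (k+1))}
    (hψ : ∀ v : Fin (k+1) → E n, Orthonormal ℝ v → ψ v ≤ 1)
    {w : Fin (k+1) → E n} (hw : Orthonormal ℝ w)
    (hw1 : ψ w = 1 ∨ ψ w = -1) {x : E n} (hx : ∀ j, ⟪x, w j⟫ = 0) (ℓ : Fin (k+1)) :
    ψ (Function.update w ℓ x) = 0 := by
  classical
  rcases eq_or_ne x 0 with rfl | hx0
  · simp
  -- reduce to the unit-vector case
  have hnx : ‖x‖ ≠ 0 := norm_ne_zero_iff.2 hx0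
  obtain ⟨x', hx'def⟩ : ∃ x' : E n, x' = ‖x‖⁻¹ • x := ⟨_, rfl⟩
  have hxu : x = ‖x‖ • x' := by
    rw [hx'def, smul_smul, mul_inv_cancel₀ hnx, one_smul]
  have hx'1 : ⟪x', x'⟫ = 1 := by
    rw [hx'def, real_inner_smul_left, real_inner_smul_right,
      real_inner_self_eq_norm_sq]
    field_simp
  have hx' : ∀ j, ⟪x', w j⟫ = 0 := fun j => by
    rw [hx'def, real_inner_smul_left, hx j, mul_zero]
  suffices hmain : ψ (Function.update w ℓ x') = 0 by
    rw [hxu, ψ.map_update_smul, hmain, smul_zero]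
  obtain ⟨c, hc⟩ : ∃ c : ℝ, c = ψ (Function.update w ℓ x') := ⟨_, rfl⟩
  obtain ⟨ε, hε⟩ : ∃ e : ℝ, e = ψ w := ⟨_, rfl⟩
  rw [← hε] at hw1
  have hval : ∀ t : ℝ,
      ψ (Function.update w ℓ (Real.cos t • w ℓ + Real.sin t • x'))
        = Real.cos t * ε + Real.sin t * c := by
    intro t
    rw [ψ.map_update_add, ψ.map_update_smul, ψ.map_update_smul, Function.update_eq_self,
      ← hε, ← hc, smul_eq_mul, smul_eq_mul]
  have hwij := orthonormal_iff_ite.mp hw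
  have horth : ∀ t : ℝ,
      Orthonormal ℝ (Function.update w ℓ (Real.cos t • w ℓ + Real.sin t • x')) := by
    intro t
    apply orthonormal_update hw ℓ _ ?_ ?_
    · have h1 : ⟪w ℓ, w ℓ⟫ = 1 := by simpa using hwij ℓ ℓ
      have h2 : ⟪w ℓ, x'⟫ = 0 := by rw [real_inner_comm]; exact hx' ℓ
      have h4 : ⟪x', w ℓ⟫ = 0 := hx' ℓ
      have expand : ⟪Real.cos t • w ℓ + Real.sin t • x',
            Real.cos t • w ℓ + Real.sin t • x'⟫
          = Real.cos t * Real.cos t * ⟪w ℓ, w ℓ⟫ + Real.cos t * Real.sin t * ⟪w ℓ, x'⟫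
            + (Real.sin t * Real.cos t * ⟪x', w ℓ⟫
              + Real.sin t * Real.sin t * ⟪x', x'⟫) := by
        simp only [inner_add_left, inner_add_right, real_inner_smul_left,
          real_inner_smul_right]
        ring
      rw [expand, h1, h2, h4, hx'1]
      linear_combination Real.sin_sq_add_cos_sq t
    · intro j hj
      have h3 : ⟪w ℓ, w j⟫ = 0 := by
        have := hwij ℓ j
        simpa [Ne.symm hj] using this
      rw [inner_add_left, real_inner_smul_left, real_inner_smul_left, h3, hx' j]
      ring
  have habs : ∀ t : ℝ, |Real.cos t * ε + Real.sin t * c| ≤ 1 := by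
    intro t
    rw [← hval t]
    exact comass_abs hψ (horth t)
  have hε1 : |ε| = 1 := by rcases hw1 with h | h <;> rw [h] <;> simp
  have hε2 : ε ^ 2 = 1 := by
    have h := sq_abs ε
    rw [hε1] at h
    simpa using h.symm
  obtain ⟨u, hu⟩ : ∃ u : ℝ, u = ε * c := ⟨_, rfl⟩
  have hu2 : u ^ 2 = c ^ 2 := by rw [hu, mul_pow, hε2, one_mul]
  have hD : (0 : ℝ) < 1 + c ^ 2 := by positivity
  have hsD : Real.sqrt (1 + c ^ 2) ≠ 0 := by positivity
  have hval2 : Real.cos (Real.arctan u) * ε + Real.sin (Real.arctan u) * c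
      = ε * Real.sqrt (1 + c ^ 2) := by
    rw [Real.cos_arctan, Real.sin_arctan, hu2, hu]
    calc 1 / Real.sqrt (1 + c ^ 2) * ε + (ε * c) / Real.sqrt (1 + c ^ 2) * c
        = ε * ((1 + c ^ 2) / Real.sqrt (1 + c ^ 2)) := by ring
      _ = ε * Real.sqrt (1 + c ^ 2) := by rw [Real.div_sqrt]
  have hle : Real.sqrt (1 + c ^ 2) ≤ 1 := by
    have h := habs (Real.arctan u)
    rw [hval2, abs_mul, hε1, one_mul,
      abs_of_nonneg (Real.sqrt_nonneg _)] at h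
    exact h
  have h1 : 1 + c ^ 2 ≤ 1 := by
    nlinarith [Real.sq_sqrt hD.le, Real.sqrt_nonneg (1 + c ^ 2)]
  have hc0 : c = 0 := by nlinarith [sq_nonneg c]
  rw [← hc, hc0]

end HLaux

/-- **Proposition 3.4, Harvey–Lawson.**  Let `1 < m < n`, `φ` a parallel
calibration of degree `m` on ℝⁿ, `ψ = (∂_r ⌟ φ)|_{S^{n-1}}` and `M` a φ-submanifold of
`ℝⁿ∖{0}` (with frame `σ`).  Then `⟨T⃗M, d(s*ψ)⟩ = m r^{-m} |∂_r ∧ T⃗M|²`, where the left-hand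
side is the exterior derivative of `s*ψ` evaluated on the oriented orthonormal frame of `M`,
and `|∂_r ∧ T⃗M|² = 1 - Σᵢ ⟨∂_r, τᵢ⟩²` is the squared norm of the component of `∂_r` normal
to `M`. -/
theorem pairing_extDeriv_pullback_psi {n m : ℕ} (hm : 1 < m) (hmn : m < n)
    (φ : AlternatingMap ℝ (E n) ℝ (Fin m)) (hφ : ComassLeOne φ)
    (M : Set (E n)) (σ : E n → Fin m → E n)
    (hM : IsPhiSubmanifoldOf φ M σ {a : E n | a ≠ 0}) :
    ∀ a ∈ M,
      extD (pullPsi φ) a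
          (fun i => σ a (Fin.cast (Nat.succ_pred_eq_of_pos (by omega : 0 < m)) i)) =
        (m : ℝ) * (‖a‖ ^ m)⁻¹ * (1 - ∑ i, ⟪sphProj a, σ a i⟫ ^ 2) := by
  obtain ⟨k, rfl⟩ : ∃ k, m = k + 1 := ⟨m - 1, by omega⟩
  intro a haM
  have ha0 : a ≠ 0 := hM.1 haM
  have hna : ‖a‖ ≠ 0 := norm_ne_zero_iff.2 ha0
  have hφ1 : φ (σ a) = 1 := hM.2.2 a haM
  have honv : Orthonormal ℝ (σ a) := hM.2.1.1 a haM
  have hwij := orthonormal_iff_ite.mp honv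
  -- closed form for the pulled-back form
  have hclosed : ∀ y : E n, y ≠ 0 → ∀ w : Fin k → E n,
      pullPsi φ y w = (‖y‖ ^ (k + 1))⁻¹ * φ (Fin.cons y w) := by
    intro y hy w
    have hny : ‖y‖ ≠ 0 := norm_ne_zero_iff.2 hy
    have h1 : pullPsi φ y w = φ (Fin.cons (sphProj y)
        fun j => ‖y‖⁻¹ • w j + (-((‖y‖ ^ 2)⁻¹ * ⟪y, w j⟫)) • sphProj y) := by
      have harg : (fun j : Fin (k + 1 - 1) => fderiv ℝ (sphProj (n := n)) y (w j))
          = fun j : Fin (k + 1 - 1) =>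
              ‖y‖⁻¹ • w j + (-((‖y‖ ^ 2)⁻¹ * ⟪y, w j⟫)) • sphProj y := by
        funext j
        exact HLaux.fderiv_sphProj_apply hy (w j)
      simp only [pullPsi, harg, HLaux.minsert_eq_cons]
      rfl
    rw [h1, HLaux.cons_expand φ (sphProj y) (‖y‖⁻¹)
      (fun j => -((‖y‖ ^ 2)⁻¹ * ⟪y, w j⟫)) w]
    have h2 : φ (Fin.cons (sphProj y) w) = ‖y‖⁻¹ * φ (Fin.cons y w) := by
      rw [show sphProj y = ‖y‖⁻¹ • y from rfl, HLaux.cons_smul_head]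
    rw [h2, ← inv_pow, pow_succ]
    ring
  -- derivative of the closed form
  have hderiv : ∀ (w : Fin k → E n) (b : E n),
      fderiv ℝ (fun y => pullPsi φ y w) a b
        = -((k : ℝ) + 1) * (‖a‖ ^ (k + 3))⁻¹ * ⟪a, b⟫ * φ (Fin.cons a w)
          + (‖a‖ ^ (k + 1))⁻¹ * φ (Fin.cons b w) := by
    intro w b
    have hop : {y : E n | y ≠ 0} ∈ nhds a := isOpen_ne.mem_nhds ha0
    have hEq : (fun y => pullPsi φ y w)
        =ᶠ[nhds a] fun y => (‖y‖ ^ (k + 1))⁻¹ * φ (Fin.cons y w) :=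
      Filter.eventuallyEq_of_mem hop fun y hy => hclosed y hy w
    rw [hEq.fderiv_eq]
    have hL : HasFDerivAt (fun y : E n => φ (Fin.cons y w))
        ((HLaux.consLin φ w).toContinuousLinearMap) a :=
      ((HLaux.consLin φ w).toContinuousLinearMap).hasFDerivAt
    have hpow : HasFDerivAt (fun y : E n => (‖y‖ ^ (k + 1))⁻¹)
        ((-(((k : ℝ) + 1) * ‖a‖ ^ k) / (‖a‖ ^ (k + 1)) ^ 2)
          • (‖a‖⁻¹ • innerSL ℝ a)) a := by
      have h1 : HasDerivAt (fun t : ℝ => (t ^ (k + 1))⁻¹)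
          (-(((k : ℝ) + 1) * ‖a‖ ^ k) / (‖a‖ ^ (k + 1)) ^ 2) ‖a‖ := by
        have := (hasDerivAt_pow (k + 1) ‖a‖).inv (pow_ne_zero _ hna)
        simp only [Nat.cast_add, Nat.cast_one, add_tsub_cancel_right] at this
        exact this
      exact h1.comp_hasFDerivAt a (HLaux.hasFDerivAt_norm_self ha0)
    have hmul := hpow.mul hL
    have hmul' : HasFDerivAt (fun y : E n => (‖y‖ ^ (k + 1))⁻¹ * φ (Fin.cons y w)) _ a := hmul
    rw [hmul'.fderiv]
    simp only [ContinuousLinearMap.add_apply, ContinuousLinearMap.smul_apply,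
      ContinuousLinearMap.coe_smul', Pi.smul_apply, innerSL_apply_apply,
      LinearMap.coe_toContinuousLinearMap', HLaux.consLin_apply, smul_eq_mul]
    rw [real_inner_comm]
    field_simp
    ring
  -- permutation bookkeeping
  have hcomp : ∀ i : Fin (k + 1),
      (σ a ∘ (i.cycleRange.symm : Equiv.Perm (Fin (k + 1))))
        = Fin.cons (σ a i) fun j : Fin (k + 1 - 1) => σ a (i.succAbove j) := by
    intro i
    funext j
    induction j using Fin.cases with
    | zero => simp [Fin.cycleRange_symm_zero]
    | succ t => simp [Fin.cycleRange_symm_succ]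
  have hsign : ∀ i : Fin (k + 1),
      φ (Fin.cons (σ a i) fun j : Fin (k + 1 - 1) => σ a (i.succAbove j)) = (-1 : ℝ) ^ (i : ℕ) := by
    intro i
    rw [← hcomp i, φ.map_perm, Equiv.Perm.sign_symm, Fin.sign_cycleRange, hφ1]
    simp [Units.smul_def]
  -- criticality of the calibration along M
  have hcrit : ∀ (i : Fin (k + 1)) (x : E n), (∀ j, ⟪x, σ a j⟫ = 0) →
      φ (Fin.cons x fun j : Fin (k + 1 - 1) => σ a (i.succAbove j)) = 0 := by
    intro i x hx
    have h1 : φ (Function.update (σ a ∘ (i.cycleRange.symm : Equiv.Perm (Fin (k + 1)))) 0 x)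
        = 0 := by
      apply HLaux.crit hφ (honv.comp _ (Equiv.injective _)) ?_ (fun j => hx _) 0
      rw [φ.map_perm, Equiv.Perm.sign_symm, Fin.sign_cycleRange, hφ1]
      rcases neg_one_pow_eq_or ℤˣ (i : ℕ) with h | h <;> rw [h] <;> simp
    rw [hcomp i, Fin.update_cons_zero] at h1
    exact h1
  -- decomposition of the radial direction
  obtain ⟨x, hxdef⟩ : ∃ x : E n,
      x = sphProj a - ∑ j, ⟪sphProj a, σ a j⟫ • σ a j := ⟨_, rfl⟩
  have hudecomp : sphProj a = (∑ j, ⟪sphProj a, σ a j⟫ • σ a j) + x := by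
    rw [hxdef]; abel
  have hxperp : ∀ j, ⟪x, σ a j⟫ = 0 := by
    intro j
    have hsum : ∑ l, ⟪sphProj a, σ a l⟫ * ⟪σ a l, σ a j⟫ = ⟪sphProj a, σ a j⟫ := by
      rw [Finset.sum_eq_single j]
      · rw [hwij j j]; simp
      · intro l _ hlj; rw [hwij l j]; simp [hlj]
      · intro h; exact absurd (Finset.mem_univ j) h
    rw [hxdef, inner_sub_left, sum_inner]
    simp only [real_inner_smul_left]
    rw [hsum]; ring
  have haa : a = ‖a‖ • sphProj a := by
    rw [show sphProj a = ‖a‖⁻¹ • a from rfl, smul_smul, mul_inv_cancel₀ hna, one_smul]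
  -- the key evaluation
  have hAi : ∀ i : Fin (k + 1), φ (Fin.cons a fun j : Fin (k + 1 - 1) => σ a (i.succAbove j))
      = ‖a‖ * ⟪sphProj a, σ a i⟫ * (-1 : ℝ) ^ (i : ℕ) := by
    intro i
    have h0 : φ (Fin.cons a fun j : Fin (k + 1 - 1) => σ a (i.succAbove j))
        = ‖a‖ * φ (Fin.cons (sphProj a) fun j : Fin (k + 1 - 1) => σ a (i.succAbove j)) := by
      rw [show (Fin.cons a fun j : Fin (k + 1 - 1) => σ a (i.succAbove j) : Fin (k + 1) → E n)
          = Fin.cons (‖a‖ • sphProj a) fun j : Fin (k + 1 - 1) => σ a (i.succAbove j) from by rw [← haa]]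
      exact HLaux.cons_smul_head φ _ _ _
    have h1 : φ (Fin.cons (sphProj a) fun j : Fin (k + 1 - 1) => σ a (i.succAbove j))
        = (∑ l, ⟪sphProj a, σ a l⟫ * φ (Fin.cons (σ a l) fun j : Fin (k + 1 - 1) => σ a (i.succAbove j)))
          + φ (Fin.cons x fun j : Fin (k + 1 - 1) => σ a (i.succAbove j)) := by
      conv_lhs => rw [hudecomp]
      rw [HLaux.cons_add_head]
      congr 1
      calc φ (Fin.cons (∑ l, ⟪sphProj a, σ a l⟫ • σ a l) fun j : Fin (k + 1 - 1) => σ a (i.succAbove j))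
          = HLaux.consLin φ (fun j : Fin (k + 1 - 1) => σ a (i.succAbove j))
              (∑ l, ⟪sphProj a, σ a l⟫ • σ a l) := rfl
        _ = ∑ l, HLaux.consLin φ (fun j : Fin (k + 1 - 1) => σ a (i.succAbove j))
              (⟪sphProj a, σ a l⟫ • σ a l) := map_sum _ _ _
        _ = ∑ l, ⟪sphProj a, σ a l⟫
              * φ (Fin.cons (σ a l) fun j : Fin (k + 1 - 1) => σ a (i.succAbove j)) := by
            refine Finset.sum_congr rfl fun l _ => ?_
            rw [(HLaux.consLin φ fun j : Fin (k + 1 - 1) => σ a (i.succAbove j)).map_smul, smul_eq_mul,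
              HLaux.consLin_apply]
    have hterm0 : ∀ l, l ≠ i →
        φ (Fin.cons (σ a l) fun j : Fin (k + 1 - 1) => σ a (i.succAbove j)) = 0 := by
      intro l hl
      obtain ⟨j, hj⟩ := Fin.exists_succAbove_eq hl
      exact HLaux.cons_eq_zero_of_mem φ _ _ j (by rw [hj])
    have hsum2 : (∑ l, ⟪sphProj a, σ a l⟫
          * φ (Fin.cons (σ a l) fun j : Fin (k + 1 - 1) => σ a (i.succAbove j)))
        = ⟪sphProj a, σ a i⟫ * (-1 : ℝ) ^ (i : ℕ) := by
      rw [Finset.sum_eq_single i]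
      · rw [hsign i]
      · intro l _ hl; rw [hterm0 l hl]; ring
      · intro h; exact absurd (Finset.mem_univ i) h
    rw [h0, h1, hsum2, hcrit i x hxperp]
    ring
  have hinner_a : ∀ b : E n, ⟪a, b⟫ = ‖a‖ * ⟪sphProj a, b⟫ := by
    intro b
    conv_lhs => rw [haa]
    rw [real_inner_smul_left]
  -- assembling the sum
  have hvv : (fun i : Fin (k + 1 - 1 + 1) =>
      σ a (Fin.cast (Nat.succ_pred_eq_of_pos (by omega : 0 < k + 1)) i)) = σ a := by
    funext i
    exact congrArg (σ a) (Fin.ext rfl)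
  have hterm : ∀ i : Fin (k + 1),
      (-1 : ℝ) ^ (i : ℕ)
          * fderiv ℝ (fun y => pullPsi φ y fun j : Fin (k + 1 - 1) => σ a (i.succAbove j)) a (σ a i)
        = (‖a‖ ^ (k + 1))⁻¹
          - ((k : ℝ) + 1) * (‖a‖ ^ (k + 1))⁻¹ * ⟪sphProj a, σ a i⟫ ^ 2 := by
    intro i
    rw [hderiv, hAi i, hsign i, hinner_a]
    rcases neg_one_pow_eq_or ℝ (i : ℕ) with h | h <;> rw [h] <;> field_simp <;> ring
  have hcast : ∀ (h : k + 1 - 1 + 1 = k + 1) (i : Fin (k + 1 - 1 + 1)),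
      Fin.cast h i = i := fun h i => rfl
  simp only [extD, hcast]
  refine Eq.trans (Finset.sum_congr rfl fun (i : Fin (k + 1)) _ => hterm i) ?_
  show ∑ i : Fin (k + 1),
      ((‖a‖ ^ (k + 1))⁻¹ - ((k : ℝ) + 1) * (‖a‖ ^ (k + 1))⁻¹ * ⟪sphProj a, σ a i⟫ ^ 2)
    = ((k + 1 : ℕ) : ℝ) * (‖a‖ ^ (k + 1))⁻¹
        * (1 - ∑ i : Fin (k + 1), ⟪sphProj a, σ a i⟫ ^ 2)
  rw [Finset.sum_sub_distrib, Finset.sum_const, Finset.card_univ, ← Finset.mul_sum]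
  simp only [Fintype.card_fin, nsmul_eq_mul]
  push_cast
  ring
end
end
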